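/- arXiv:1001.4891 — 3 statements merged into one kernel-verified Lean document; each statement's English description precedes it below -/
import Mathlib

section
/- Let F be a number field of odd degree n over ℚ, and let u be a unit of the ring of integers of F that is positive under every real embedding of F. If some complex embedding σ of F satisfies |σ(u)| = 1, then u = 1. -/
open NumberField

theorem stmt_1 (F : Type*) [Field F] [NumberField F]
    (hodd : Odd (Module.finrank ℚ F))
    (u : (𝓞 F)ˣ)
    (hpos : ∀ τ : F →+* ℝ, 0 < τ (algebraMap (𝓞 F) F u))
    (σ : F →+* ℂ)
    (habs : ‖σ (algebraMap (𝓞 F) F u)‖ = 1) :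
    u = 1 := by
  set x : F := algebraMap (𝓞 F) F u with hx
  have hxint : IsIntegral ℚ x := IsIntegral.of_finite ℚ x
  set p : Polynomial ℚ := minpoly ℚ x with hp
  have hpirr : Irreducible p := minpoly.irreducible hxint
  have hpmonic : p.Monic := minpoly.monic hxint
  set z : ℂ := σ x with hz
  have hz1 : z ≠ 0 := by
    intro h
    rw [h] at habs
    simp at habs
  -- z is a root of p
  have hroot : Polynomial.aeval z p = 0 := by
    have := minpoly.aeval ℚ x
    rw [show z = σ.toRatAlgHom x from rfl, Polynomial.aeval_algHom_apply, this, map_zero]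
  -- conj z = z⁻¹
  have hconj : (starRingEnd ℂ) z = z⁻¹ := by
    have h1 : z * (starRingEnd ℂ) z = 1 := by
      rw [Complex.mul_conj, Complex.normSq_eq_norm_sq, habs]
      norm_num
    field_simp
    linear_combination h1
  -- z⁻¹ is a root of p
  have hroot' : Polynomial.aeval z⁻¹ p = 0 := by
    rw [← hconj]
    rw [show (starRingEnd ℂ) z = (starRingEnd ℂ).toRatAlgHom z from rfl,
      Polynomial.aeval_algHom_apply, hroot, map_zero]
  -- z⁻¹ is a root of reverse p
  have hinv : Invertible z := invertibleOfNonzero hz1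
  have hrev : Polynomial.aeval z⁻¹ (p.reverse) = 0 := by
    have := (Polynomial.eval₂_reverse_eq_zero_iff (algebraMap ℚ ℂ) z p).mpr hroot
    simpa [Polynomial.aeval_def, invOf_eq_inv] using this
  have hmin : minpoly ℚ z⁻¹ = p :=
    (minpoly.eq_of_irreducible_of_monic hpirr hroot' hpmonic).symm
  have hdvd : p ∣ p.reverse := by
    have h := minpoly.dvd ℚ z⁻¹ hrev
    rwa [hmin] at h
  have hxne : x ≠ 0 := fun h => hz1 (by rw [hz, h, map_zero])
  have ha0 : p.coeff 0 ≠ 0 := minpoly.coeff_zero_ne_zero hxint hxne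
  set a : ℚ := p.coeff 0 with haa
  have hpne : p ≠ 0 := hpmonic.ne_zero
  have htr : p.natTrailingDegree = 0 := by
    rw [Polynomial.natTrailingDegree_eq_zero]; exact Or.inr ha0
  have hdeg : p.reverse.natDegree = p.natDegree := by
    rw [Polynomial.reverse_natDegree, htr, Nat.sub_zero]
  -- reverse p = p * C a
  obtain ⟨q, hq⟩ := hdvd
  have hqrev : p.reverse ≠ 0 := by rwa [Ne, Polynomial.reverse_eq_zero]
  have hqne : q ≠ 0 := fun h => hqrev (by rw [hq, h, mul_zero])
  have hqdeg : q.natDegree = 0 := by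
    have := Polynomial.natDegree_mul hpne hqne
    rw [← hq, hdeg] at this
    omega
  obtain ⟨c, hc⟩ : ∃ c : ℚ, q = Polynomial.C c :=
    ⟨q.coeff 0, Polynomial.eq_C_of_natDegree_eq_zero hqdeg⟩
  have hca : c = a := by
    have h1 : p.reverse.leadingCoeff = p.trailingCoeff := Polynomial.reverse_leadingCoeff p
    rw [hq, hc, Polynomial.leadingCoeff_mul, Polynomial.leadingCoeff_C,
      hpmonic.leadingCoeff, one_mul, Polynomial.trailingCoeff, htr] at h1
    exact h1
  have hrevp : p.reverse = p * Polynomial.C a := by rw [hq, hc, hca]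
  -- a * a = 1
  have haa1 : a * a = 1 := by
    have h1 := Polynomial.coeff_zero_reverse p
    rw [hrevp, Polynomial.coeff_mul_C, hpmonic.leadingCoeff] at h1
    rw [haa]; linarith [h1]
  -- degree is odd
  have hd_dvd : p.natDegree ∣ Module.finrank ℚ F := minpoly.degree_dvd hxint
  have hdodd : Odd p.natDegree := by
    rcases Nat.even_or_odd p.natDegree with he | ho
    · exfalso
      obtain ⟨k, hk⟩ := hd_dvd
      exact (Nat.not_even_iff_odd.mpr hodd) (by rw [hk]; exact he.mul_right k)
    · exact ho
  -- evaluations at 1 and -1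
  have hE1 : p.eval 1 = p.eval 1 * a := by
    haveI : Invertible (1 : ℚ) := invertibleOne
    have h : p.reverse.eval (⅟(1:ℚ)) * (1:ℚ) ^ p.natDegree = p.eval 1 :=
      Polynomial.eval₂_reverse_mul_pow (RingHom.id ℚ) (1 : ℚ) p
    rw [invOf_one, one_pow, mul_one] at h
    calc p.eval 1 = p.reverse.eval 1 := h.symm
    _ = p.eval 1 * a := by rw [hrevp, Polynomial.eval_mul, Polynomial.eval_C]
  have hEm : p.eval (-1) = p.eval (-1) * a * (-1) := by
    haveI hinvm : Invertible (-1 : ℚ) := invertibleOfNonzero (by norm_num)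
    have h : p.reverse.eval (⅟(-1:ℚ)) * (-1:ℚ) ^ p.natDegree = p.eval (-1) :=
      Polynomial.eval₂_reverse_mul_pow (RingHom.id ℚ) (-1 : ℚ) p
    rw [invOf_eq_inv, hdodd.neg_one_pow] at h
    norm_num at h
    have h2 : p.reverse.eval (-1) = p.eval (-1) * a := by
      rw [hrevp, Polynomial.eval_mul, Polynomial.eval_C]
    linarith [h, h2]
  -- p has root 1 or -1
  have key : ∀ r : ℚ, p.eval r = 0 → x = algebraMap ℚ F r := by
    intro r hr
    have hdvd' : (Polynomial.X - Polynomial.C r) ∣ p :=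
      Polynomial.dvd_iff_isRoot.mpr hr
    obtain ⟨e, he⟩ := hdvd'
    have hassoc : p = Polynomial.X - Polynomial.C r := by
      rcases hpirr.isUnit_or_isUnit he with h | h
      · exact absurd h (by
          intro h
          have := Polynomial.natDegree_eq_zero_of_isUnit h
          simp [Polynomial.natDegree_X_sub_C] at this)
      · refine Polynomial.eq_of_monic_of_associated hpmonic (Polynomial.monic_X_sub_C r) ?_
        exact Associated.symm ⟨h.unit, by rw [h.unit_spec, ← he]⟩
    have := minpoly.aeval ℚ x
    rw [← hp, hassoc] at this
    simp only [map_sub, Polynomial.aeval_X, Polynomial.aeval_C] at this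
    linear_combination (norm := ring_nf) this
  rcases mul_self_eq_one_iff.mp haa1 with h1 | hm1
  · -- a = 1 : then eval (-1) = 0, x = -1, contradicts positivity
    exfalso
    rw [h1, mul_one] at hEm
    have hm : p.eval (-1) = 0 := by linarith
    have hxm := key (-1) hm
    -- get a real embedding
    have hcard := NumberField.InfinitePlace.card_add_two_mul_card_eq_rank F
    have hnr : NumberField.InfinitePlace.nrRealPlaces F ≠ 0 := by
      intro h; rw [h] at hcard
      exact (Nat.not_even_iff_odd.mpr hodd) ⟨NumberField.InfinitePlace.nrComplexPlaces F, by omega⟩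
    have hne : Nonempty { w : NumberField.InfinitePlace F // NumberField.InfinitePlace.IsReal w } := by
      classical
      exact Fintype.card_pos_iff.mp (Nat.pos_of_ne_zero hnr)
    obtain ⟨w, hw⟩ := hne.some
    have hτ := hpos (NumberField.InfinitePlace.embedding_of_isReal hw)
    rw [hxm] at hτ
    rw [map_neg, map_one, map_neg, map_one] at hτ
    exact absurd hτ (by norm_num)
  · -- a = -1 : then eval 1 = 0, x = 1
    rw [hm1] at hE1
    have h1 : p.eval 1 = 0 := by linarith
    have hx1 := key 1 h1
    rw [map_one] at hx1
    refine Units.ext (NumberField.RingOfIntegers.coe_injective ?_)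
    rw [hx] at hx1
    simpa using hx1
end

section
/- Let G = A ⋊ U be a semidirect product where A is the additive group of the ring of integers O_F of a number field, U is an abelian group of units of O_F acting on A by multiplication, and suppose U contains some unit u ≠ 1. Then the commutator [T_a, R_u] of the translation by a ∈ A and the action of u ∈ U equals translation by (1-u)·a; consequently, for every u ∈ U the subgroup (1-u)·O_F is contained in the commutator subgroup [G, G], and the image of A in the abelianization of G is finite. -/
open NumberField SemidirectProduct
open scoped commutatorElement

/-- The monoid hom sending an additive automorphism to the corresponding
multiplicative automorphism of `Multiplicative A`. -/
def addAutToMulAut (A : Type*) [AddGroup A] : Multiplicative (AddAut A) →* MulAut (Multiplicative A) where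
  toFun e := AddEquiv.toMultiplicative e.toAdd
  map_one' := rfl
  map_mul' _ _ := rfl

/-- The action of a group `U` of units of `𝓞 F` on the (multiplicative version of the)
additive group of `𝓞 F`, by multiplication. -/
noncomputable def unitsAction (F : Type*) [Field F] [NumberField F]
    (U : Subgroup (𝓞 F)ˣ) : U →* MulAut (Multiplicative (𝓞 F)) :=
  (addAutToMulAut (𝓞 F)).comp ((DistribMulAction.toAddAut (𝓞 F)ˣ (𝓞 F)).comp U.subtype)

theorem stmt_8 (F : Type*) [Field F] [NumberField F] (U : Subgroup (𝓞 F)ˣ)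
    (hU : ∃ u ∈ U, u ≠ 1) :
    (∀ (a : 𝓞 F) (u : U),
      ⁅(inl (Multiplicative.ofAdd a) : Multiplicative (𝓞 F) ⋊[unitsAction F U] U),
        (inr u : Multiplicative (𝓞 F) ⋊[unitsAction F U] U)⁆ =
        inl (Multiplicative.ofAdd ((1 - ((u : (𝓞 F)ˣ) : 𝓞 F)) * a))) ∧
    (∀ u : U, ∀ x ∈ Ideal.span {(1 : 𝓞 F) - ((u : (𝓞 F)ˣ) : 𝓞 F)},
      (inl (Multiplicative.ofAdd x) : Multiplicative (𝓞 F) ⋊[unitsAction F U] U) ∈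
        commutator (Multiplicative (𝓞 F) ⋊[unitsAction F U] U)) ∧
    Finite ((Abelianization.of.comp
      (inl : Multiplicative (𝓞 F) →* Multiplicative (𝓞 F) ⋊[unitsAction F U] U)).range) := by
  have h1 : ∀ (a : 𝓞 F) (u : U),
      ⁅(inl (Multiplicative.ofAdd a) : Multiplicative (𝓞 F) ⋊[unitsAction F U] U),
        (inr u : Multiplicative (𝓞 F) ⋊[unitsAction F U] U)⁆ =
        inl (Multiplicative.ofAdd ((1 - ((u : (𝓞 F)ˣ) : 𝓞 F)) * a)) := by
    intro a u
    have hact : ∀ (v : U) (m : Multiplicative (𝓞 F)), unitsAction F U v m =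
        Multiplicative.ofAdd (((v : (𝓞 F)ˣ) : 𝓞 F) * Multiplicative.toAdd m) := fun _ _ => rfl
    rw [commutatorElement_def]
    ext <;> simp only [SemidirectProduct.mul_left, SemidirectProduct.inv_left, SemidirectProduct.inv_right, SemidirectProduct.mul_right, left_inl, right_inl, left_inr, right_inr] <;> simp [hact, sub_mul, mul_comm, Units.smul_def, mul_sub,
      mul_one, sub_eq_add_neg, ← ofAdd_neg, ← ofAdd_add]
    ring
  have h2 : ∀ u : U, ∀ x ∈ Ideal.span {(1 : 𝓞 F) - ((u : (𝓞 F)ˣ) : 𝓞 F)},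
      (inl (Multiplicative.ofAdd x) : Multiplicative (𝓞 F) ⋊[unitsAction F U] U) ∈
        commutator (Multiplicative (𝓞 F) ⋊[unitsAction F U] U) := by
    intro u x hx
    rw [Ideal.mem_span_singleton] at hx
    obtain ⟨c, rfl⟩ := hx
    rw [← h1 c u]
    exact Subgroup.commutator_mem_commutator (Subgroup.mem_top _) (Subgroup.mem_top _)
  refine ⟨h1, h2, ?_⟩
  obtain ⟨u, huU, hu⟩ := hU
  set v : U := ⟨u, huU⟩
  set I : Ideal (𝓞 F) := Ideal.span {(1 : 𝓞 F) - ((u : (𝓞 F)ˣ) : 𝓞 F)}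
  have hI : I ≠ ⊥ := by
    simp only [I, ne_eq, Ideal.span_singleton_eq_bot, sub_eq_zero]
    intro h
    exact hu (Units.ext (by simpa using h.symm))
  haveI : Fintype (𝓞 F ⧸ I) := @Fintype.ofFinite _ (Ideal.finiteQuotientOfFreeOfNeBot I hI)
  haveI : Finite (𝓞 F ⧸ I) := Finite.of_fintype _
  set f := (Abelianization.of.comp
      (inl : Multiplicative (𝓞 F) →* Multiplicative (𝓞 F) ⋊[unitsAction F U] U))
  -- f kills I
  have hker : ∀ x y : 𝓞 F, x - y ∈ I → f (Multiplicative.ofAdd x) = f (Multiplicative.ofAdd y) := by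
    intro x y hxy
    have : f (Multiplicative.ofAdd (x - y)) = 1 :=
      Abelianization.commutator_subset_ker Abelianization.of (h2 v (x - y) hxy)
    have hsplit : (Multiplicative.ofAdd x : Multiplicative (𝓞 F)) =
        Multiplicative.ofAdd (x - y) * Multiplicative.ofAdd y := by
      rw [← ofAdd_add]; ring_nf
    rw [hsplit, map_mul, this, one_mul]
  -- surjection from the finite quotient onto the range
  let g : 𝓞 F ⧸ I → f.range := fun q =>
    Quotient.liftOn' q (fun a => (⟨f (Multiplicative.ofAdd a), ⟨_, rfl⟩⟩ : f.range))
      (by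
        intro a b hab
        have : a - b ∈ I := by
          rw [Submodule.quotientRel_def] at hab
          exact hab
        exact Subtype.ext (hker a b this))
  have hg : Function.Surjective g := by
    rintro ⟨-, a, rfl⟩
    exact ⟨Submodule.Quotient.mk a.toAdd, rfl⟩
  exact Finite.of_surjective g hg
end

section
/- Let F be a number field of even degree n = [F:ℚ] with exactly 2 non-real complex embeddings σ, conj(σ). Suppose there exists a totally positive unit u ≠ 1 of O_F with |σ(u)| = 1. Then F is a quadratic extension of a totally real number field E, and for every totally positive unit v of O_F one has |σ(v)|² = Nm_{F/E}(v) (viewing E ⊂ ℝ via the embedding induced by σ). -/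
open NumberField

private lemma isReal_iff_forall {F : Type*} [Field F] (φ : F →+* ℂ) :
    ComplexEmbedding.IsReal φ ↔ ∀ x, (starRingEnd ℂ) (φ x) = φ x := by
  rw [ComplexEmbedding.isReal_iff, RingHom.ext_iff]
  exact Iff.rfl

private lemma only_two {F : Type*} [Field F] [NumberField F] (σ : F →+* ℂ)
    (hσ : ¬ ComplexEmbedding.IsReal σ)
    (h2 : Nat.card {φ : F →+* ℂ // ¬ ComplexEmbedding.IsReal φ} = 2)
    (φ : F →+* ℂ) (hφ : ¬ ComplexEmbedding.IsReal φ) :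
    φ = σ ∨ φ = ComplexEmbedding.conjugate σ := by
  have hcσ : ¬ ComplexEmbedding.IsReal (ComplexEmbedding.conjugate σ) := by
    intro h
    apply hσ
    rw [isReal_iff_forall] at h ⊢
    intro x
    have := h x
    rw [ComplexEmbedding.conjugate_coe_eq] at this
    simpa using congrArg (starRingEnd ℂ) this
  have hσne : σ ≠ ComplexEmbedding.conjugate σ := by
    intro h
    apply hσ
    rw [isReal_iff_forall]
    intro x
    conv_rhs => rw [h]
    rfl
  obtain ⟨a, b, hab, huniv⟩ := Nat.card_eq_two_iff.mp h2
  have m1 : (⟨σ, hσ⟩ : {φ : F →+* ℂ // ¬ ComplexEmbedding.IsReal φ}) ∈ ({a, b} : Set _) :=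
    huniv.symm ▸ Set.mem_univ _
  have m2 : (⟨ComplexEmbedding.conjugate σ, hcσ⟩ :
      {φ : F →+* ℂ // ¬ ComplexEmbedding.IsReal φ}) ∈ ({a, b} : Set _) :=
    huniv.symm ▸ Set.mem_univ _
  have m3 : (⟨φ, hφ⟩ : {φ : F →+* ℂ // ¬ ComplexEmbedding.IsReal φ}) ∈ ({a, b} : Set _) :=
    huniv.symm ▸ Set.mem_univ _
  simp only [Set.mem_insert_iff, Set.mem_singleton_iff] at m1 m2 m3
  rcases m1 with h1 | h1 <;> rcases m2 with h2' | h2' <;> rcases m3 with h3 | h3 <;>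
    first
      | (exact absurd (congrArg Subtype.val (h1.trans h2'.symm)) hσne)
      | (left; exact congrArg Subtype.val (h3.trans h1.symm))
      | (right; exact congrArg Subtype.val (h3.trans h2'.symm))

private lemma exists_ext {F : Type*} [Field F] [NumberField F]
    (K : IntermediateField ℚ F) (ψ : K →+* ℂ) :
    ∃ φ : F →+* ℂ, ∀ x : K, φ (algebraMap K F x) = ψ x := by
  letI : Algebra K ℂ := ψ.toAlgebra
  have h : 0 < Fintype.card (F →ₐ[K] ℂ) := by
    rw [AlgHom.card]; exact Module.finrank_pos
  obtain ⟨φ₀⟩ := Fintype.card_pos_iff.mp h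
  exact ⟨φ₀.toRingHom, fun x => φ₀.commutes x⟩

private lemma norm_formula {F : Type*} [Field F] [NumberField F] (σ : F →+* ℂ)
    (hσ : ¬ ComplexEmbedding.IsReal σ)
    (E : IntermediateField ℚ F)
    (hre : ∀ ψ : E →+* ℂ, ComplexEmbedding.IsReal ψ)
    (hrank : Module.finrank E F = 2) (x : F) :
    ((‖σ x‖ : ℂ)) ^ 2 = σ (algebraMap E F (Algebra.norm E x)) := by
  classical
  letI : Algebra E ℂ := (σ.comp (algebraMap E F)).toAlgebra
  have hψ : ComplexEmbedding.IsReal (σ.comp (algebraMap E F)) := hre _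
  rw [isReal_iff_forall] at hψ
  let σ' : F →ₐ[E] ℂ := { toRingHom := σ, commutes' := fun r => rfl }
  let cσ' : F →ₐ[E] ℂ :=
    { toRingHom := ComplexEmbedding.conjugate σ,
      commutes' := fun r => hψ r }
  have hne : σ' ≠ cσ' := by
    intro h
    apply hσ
    rw [isReal_iff_forall]
    intro y
    have : σ' y = cσ' y := by rw [h]
    exact this.symm
  have hcard : Fintype.card (F →ₐ[E] ℂ) = 2 := by
    rw [AlgHom.card]; exact hrank
  have huniv : (Finset.univ : Finset (F →ₐ[E] ℂ)) = {σ', cσ'} := by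
    symm
    apply Finset.eq_univ_of_card
    rw [Finset.card_pair hne, hcard]
  have hmap : σ (algebraMap E F (Algebra.norm E x)) = algebraMap E ℂ (Algebra.norm E x) := rfl
  rw [hmap, Algebra.norm_eq_prod_embeddings, huniv, Finset.prod_pair hne]
  have : σ' x * cσ' x = σ x * (starRingEnd ℂ) (σ x) := rfl
  rw [this, Complex.mul_conj, ← Complex.sq_norm]
  push_cast
  ring

set_option maxHeartbeats 1000000 in
set_option synthInstance.maxHeartbeats 200000 in
theorem stmt_16 (F : Type*) [Field F] [NumberField F]
    (heven : Even (Module.finrank ℚ F))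
    (σ : F →+* ℂ) (hσ : ¬ ComplexEmbedding.IsReal σ)
    (h2 : Nat.card {φ : F →+* ℂ // ¬ ComplexEmbedding.IsReal φ} = 2)
    (u : (𝓞 F)ˣ) (hu : u ≠ 1)
    (hupos : ∀ τ : F →+* ℝ, 0 < τ (algebraMap (𝓞 F) F u))
    (huabs : ‖σ (algebraMap (𝓞 F) F u)‖ = 1) :
    ∃ E : IntermediateField ℚ F,
      (∀ ψ : E →+* ℂ, ComplexEmbedding.IsReal ψ) ∧
      Module.finrank E F = 2 ∧
      ∀ v : (𝓞 F)ˣ, (∀ τ : F →+* ℝ, 0 < τ (algebraMap (𝓞 F) F v)) →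
        ((‖σ (algebraMap (𝓞 F) F v)‖ : ℂ)) ^ 2 =
          σ (algebraMap E F (Algebra.norm E (algebraMap (𝓞 F) F v))) := by
  classical
  set u' : F := algebraMap (𝓞 F) F ↑u with hu'def
  have habs1 : σ u' * (starRingEnd ℂ) (σ u') = 1 := by
    rw [Complex.mul_conj, ← Complex.sq_norm, huabs]
    norm_num
  have hu'σne : σ u' ≠ 0 := by
    intro h
    rw [h] at huabs
    simp at huabs
  have hu'0 : u' ≠ 0 := by
    intro h
    apply hu'σne
    rw [h, map_zero]
  by_cases hA : (starRingEnd ℂ) (σ u') = σ u'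
  · -- σ u' is real, so u' = ±1; then u' = -1 and there are no real embeddings
    have hz : σ u' = 1 ∨ σ u' = -1 := by
      have : σ u' * σ u' = 1 := by rw [← habs1, hA]
      exact mul_self_eq_one_iff.mp this
    have hum1 : u' = -1 := by
      rcases hz with h | h
      · exfalso
        apply hu
        have : u' = (1 : F) := σ.injective (by rw [h, map_one])
        have h1 : (↑u : 𝓞 F) = 1 := by
          apply IsFractionRing.injective (𝓞 F) F
          show u' = algebraMap (𝓞 F) F 1
          rw [map_one]
          exact this
        exact Units.ext h1
      · exact σ.injective (by rw [h, map_neg, map_one])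
    have hallnonreal : ∀ φ : F →+* ℂ, ¬ ComplexEmbedding.IsReal φ := by
      intro φ hφr
      have hτ := hupos hφr.embedding
      rw [hum1, map_neg, map_one] at hτ
      linarith
    have hn : Module.finrank ℚ F = 2 := by
      rw [← NumberField.Embeddings.card F ℂ, ← Nat.card_eq_fintype_card,
        ← Nat.card_congr (Equiv.subtypeUnivEquiv hallnonreal), h2]
    have hre : ∀ ψ : (⊥ : IntermediateField ℚ F) →+* ℂ, ComplexEmbedding.IsReal ψ := by
      intro ψ
      rw [isReal_iff_forall]
      intro x
      obtain ⟨q, hq⟩ := IntermediateField.mem_bot.mp x.2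
      have hxq : x = algebraMap ℚ (⊥ : IntermediateField ℚ F) q := by
        apply Subtype.ext
        rw [← hq]
        rfl
      have : ψ x = (q : ℂ) := by
        rw [hxq]
        exact eq_ratCast (ψ.comp (algebraMap ℚ (⊥ : IntermediateField ℚ F))) q
      rw [this]
      exact map_ratCast (starRingEnd ℂ) q
    have hrank : Module.finrank (⊥ : IntermediateField ℚ F) F = 2 := by
      rw [IntermediateField.finrank_bot', hn]
    exact ⟨⊥, hre, hrank, fun v _ => norm_formula σ hσ ⊥ hre hrank _⟩
  · -- σ u' is not real
    have hconjinv : (starRingEnd ℂ) (σ u') = (σ u')⁻¹ := by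
      field_simp [← habs1]
      linear_combination habs1
    set w : F := u' + u'⁻¹ with hwdef
    have hσw : (starRingEnd ℂ) (σ w) = σ w := by
      show (starRingEnd ℂ) (σ (u' + u'⁻¹)) = σ (u' + u'⁻¹)
      rw [map_add σ, map_inv₀ σ, map_add, map_inv₀, hconjinv, inv_inv]
      exact add_comm _ _
    -- σ is real on ℚ⟮w⟯
    have hwint : IsIntegral ℚ w := IsIntegral.of_finite ℚ w
    have hσE : ∀ x ∈ IntermediateField.adjoin ℚ ({w} : Set F),
        (starRingEnd ℂ) (σ x) = σ x := by
      intro x hx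
      have hx' : x ∈ Algebra.adjoin ℚ ({w} : Set F) := by
        rw [← IntermediateField.adjoin_simple_toSubalgebra_of_isAlgebraic hwint.isAlgebraic]
        exact hx
      have hle : Algebra.adjoin ℚ ({w} : Set F) ≤
          AlgHom.equalizer (RingHom.equivRatAlgHom F ℂ σ)
            (RingHom.equivRatAlgHom F ℂ (ComplexEmbedding.conjugate σ)) := by
        rw [Algebra.adjoin_le_iff]
        intro y hy
        rw [Set.mem_singleton_iff] at hy
        subst hy
        show σ w = ComplexEmbedding.conjugate σ w
        rw [ComplexEmbedding.conjugate_coe_eq, hσw]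
      have := hle hx'
      have h' : σ x = ComplexEmbedding.conjugate σ x := this
      rw [ComplexEmbedding.conjugate_coe_eq] at h'
      exact h'.symm
    -- ℚ⟮u'⟯ = ⊤
    have hKtop : IntermediateField.adjoin ℚ ({u'} : Set F) = ⊤ := by
      by_contra hne
      set K := IntermediateField.adjoin ℚ ({u'} : Set F) with hKdef
      have hu'K : u' ∈ K := IntermediateField.mem_adjoin_simple_self ℚ u'
      have hge2 : 1 < Module.finrank K F := by
        rcases Nat.lt_or_ge 1 (Module.finrank K F) with h | h
        · exact h
        · exfalso
          have hpos : 0 < Module.finrank K F := Module.finrank_pos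
          have h1 : Module.finrank K F = 1 := le_antisymm h hpos
          have hbt : (⊥ : Subalgebra K F) = ⊤ := Subalgebra.bot_eq_top_of_finrank_eq_one h1
          apply hne
          rw [eq_top_iff]
          intro x _
          have : x ∈ (⊥ : Subalgebra K F) := by rw [hbt]; trivial
          obtain ⟨y, hy⟩ := Algebra.mem_bot.mp this
          rw [← hy]
          exact y.2
      letI : Algebra K ℂ := (σ.comp (algebraMap K F)).toAlgebra
      have hcard2 : 1 < Fintype.card (F →ₐ[K] ℂ) := by
        rw [AlgHom.card]; exact hge2
      obtain ⟨φ1, φ2, hφ12⟩ := Fintype.exists_pair_of_one_lt_card hcard2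
      have heval : ∀ φ : F →ₐ[K] ℂ, φ.toRingHom u' = σ u' := by
        intro φ
        have : φ (algebraMap K F ⟨u', hu'K⟩) = algebraMap K ℂ ⟨u', hu'K⟩ := φ.commutes _
        exact this
      have hnonreal : ∀ φ : F →ₐ[K] ℂ, ¬ ComplexEmbedding.IsReal φ.toRingHom := by
        intro φ hre
        rw [isReal_iff_forall] at hre
        have := hre u'
        rw [heval φ] at this
        exact hA this
      have hrhne : φ1.toRingHom ≠ φ2.toRingHom := by
        intro h
        exact hφ12 (AlgHom.coe_ringHom_injective h)
      have hc1 := only_two σ hσ h2 _ (hnonreal φ1)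
      have hc2 := only_two σ hσ h2 _ (hnonreal φ2)
      have hbad : (ComplexEmbedding.conjugate σ) u' = σ u' := by
        rcases hc1 with h | h <;> rcases hc2 with h' | h'
        · exact absurd (h.trans h'.symm) hrhne
        · rw [← h', heval φ2]
        · rw [← h, heval φ1]
        · exact absurd (h.trans h'.symm) hrhne
      rw [ComplexEmbedding.conjugate_coe_eq] at hbad
      exact hA hbad
    -- E = ℚ⟮w⟯
    set E := IntermediateField.adjoin ℚ ({w} : Set F) with hEdef
    have hwE : w ∈ E := IntermediateField.mem_adjoin_simple_self ℚ w
    have hre : ∀ ψ : E →+* ℂ, ComplexEmbedding.IsReal ψ := by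
      intro ψ
      obtain ⟨φ, hφ⟩ := exists_ext E ψ
      rw [isReal_iff_forall]
      intro x
      have hψx : ψ x = φ (algebraMap E F x) := (hφ x).symm
      by_cases hφr : ComplexEmbedding.IsReal φ
      · rw [isReal_iff_forall] at hφr
        rw [hψx]
        exact hφr _
      · have hmem : (algebraMap E F x : F) ∈ E := x.2
        rcases only_two σ hσ h2 φ hφr with h | h
        · rw [hψx, h]
          first
            | exact hσE _ hmem
            | exact (hσE _ hmem).symm
        · rw [hψx, h, ComplexEmbedding.conjugate_coe_eq]
          first
            | simpa using hσE _ hmem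
            | simpa using (hσE _ hmem).symm
    -- finrank E F = 2
    have hu'int : IsIntegral E u' := IsIntegral.of_finite E u'
    have hTtop : IntermediateField.adjoin E ({u'} : Set F) = ⊤ := by
      apply IntermediateField.restrictScalars_injective ℚ
      rw [IntermediateField.restrictScalars_top]
      rw [eq_top_iff, ← hKtop]
      rw [IntermediateField.adjoin_le_iff]
      intro y hy
      rw [Set.mem_singleton_iff] at hy
      subst hy
      exact IntermediateField.subset_adjoin E _ rfl
    have htop : Module.finrank E (⊤ : IntermediateField E F) = Module.finrank E F :=
      IntermediateField.finrank_top'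
    have hfr : Module.finrank E F = (minpoly E u').natDegree := by
      rw [← htop, ← hTtop]
      exact IntermediateField.adjoin.finrank hu'int
    -- minpoly degree ≤ 2
    have hwcoe : algebraMap E F ⟨w, hwE⟩ = w := rfl
    set p : Polynomial E := Polynomial.X ^ 2 +
      (Polynomial.C (-⟨w, hwE⟩) * Polynomial.X + Polynomial.C 1) with hpdef
    have hpmonic : p.Monic := by
      apply Polynomial.monic_X_pow_add
      exact lt_of_le_of_lt Polynomial.degree_linear_le (by norm_num)
    have hproot : Polynomial.aeval u' p = 0 := by
      rw [hpdef]
      simp only [map_add, map_mul, map_pow, Polynomial.aeval_X, Polynomial.aeval_C,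
        map_neg, map_one, hwcoe]
      rw [hwdef]
      field_simp
      ring
    have hdle : (minpoly E u').natDegree ≤ 2 := by
      have := minpoly.min (A := E) (x := u') hpmonic hproot
      have hpd : p.degree ≤ 2 := by
        rw [hpdef]
        refine le_trans (Polynomial.degree_add_le _ _) (max_le ?_ ?_)
        · simpa using Polynomial.degree_X_pow_le (R := E) 2
        · exact le_trans Polynomial.degree_linear_le (by norm_num)
      have : (minpoly E u').degree ≤ 2 := le_trans this hpd
      exact Polynomial.natDegree_le_iff_degree_le.mpr this
    have hdpos : 0 < (minpoly E u').natDegree := minpoly.natDegree_pos hu'int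
    have hdne1 : Module.finrank E F ≠ 1 := by
      intro h1
      have hbt : (⊥ : Subalgebra E F) = ⊤ := Subalgebra.bot_eq_top_of_finrank_eq_one h1
      have : u' ∈ (⊥ : Subalgebra E F) := by rw [hbt]; trivial
      obtain ⟨y, hy⟩ := Algebra.mem_bot.mp this
      have : u' ∈ E := by rw [← hy]; exact y.2
      exact hA (hσE u' this)
    have hrank : Module.finrank E F = 2 := by
      rw [hfr] at hdne1 ⊢
      omega
    exact ⟨E, hre, hrank, fun v _ => norm_formula σ hσ E hre hrank _⟩
end
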